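/- Positivity of the Fock state: for any finite collection f₁,…,f_N in a complex inner product space S and complex coefficients c₁,…,c_N, the sum Σ_{n,m} cₙ·conj(c_m)·exp(−‖fₙ−f_m‖²/4)·exp(−(i/2)·Im⟨fₙ,f_m⟩) is a nonnegative real number. -/

import Mathlib

open scoped ComplexConjugate Nat

lemma gram_pow_nonneg {S : Type*} [NormedAddCommGroup S] [InnerProductSpace ℂ S]
    {N : ℕ} (f : Fin N → S) (k : ℕ) (a : Fin N → ℂ) :
    ∃ r : ℝ, 0 ≤ r ∧
      ∑ n : Fin N, ∑ m : Fin N,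
        a n * conj (a m) * (inner ℂ (f m) (f n) : ℂ) ^ k = (r : ℂ) := by
  induction k generalizing a with
  | zero =>
    refine ⟨Complex.normSq (∑ n, a n), Complex.normSq_nonneg _, ?_⟩
    simp only [pow_zero, mul_one]
    rw [← Complex.mul_conj, map_sum, Finset.sum_mul_sum]
  | succ k ih =>
    set V := Submodule.span ℂ (Set.range f) with hV
    haveI : FiniteDimensional ℂ V := FiniteDimensional.span_of_finite ℂ (Set.finite_range f)
    set b := stdOrthonormalBasis ℂ V with hb
    set F : Fin N → V := fun n => ⟨f n, Submodule.subset_span (Set.mem_range_self n)⟩ with hF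
    set B : Fin (Module.finrank ℂ V) → Fin N → ℂ := fun j n => (inner ℂ (b j) (F n) : ℂ) with hB
    have hinner : ∀ n m : Fin N,
        (inner ℂ (f m) (f n) : ℂ) = ∑ j, conj (B j m) * B j n := by
      intro n m
      have h1 : (inner ℂ (f m) (f n) : ℂ) = (inner ℂ (F m) (F n) : ℂ) := rfl
      rw [h1, ← b.sum_inner_mul_inner (F m) (F n)]
      refine Finset.sum_congr rfl fun j _ => ?_
      rw [← inner_conj_symm (F m) (b j)]
    have key : (∑ n : Fin N, ∑ m : Fin N,
          a n * conj (a m) * (inner ℂ (f m) (f n) : ℂ) ^ (k + 1))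
        = ∑ j, ∑ n : Fin N, ∑ m : Fin N,
            (a n * B j n) * conj (a m * B j m) * (inner ℂ (f m) (f n) : ℂ) ^ k := by
      have e1 : ∀ n m : Fin N, a n * conj (a m) * (inner ℂ (f m) (f n) : ℂ) ^ (k + 1)
          = ∑ j, (a n * B j n) * conj (a m * B j m) * (inner ℂ (f m) (f n) : ℂ) ^ k := by
        intro n m
        rw [pow_succ]
        nth_rewrite 2 [hinner n m]
        rw [Finset.mul_sum, Finset.mul_sum]
        refine Finset.sum_congr rfl fun j _ => ?_
        simp only [map_mul]
        ring
      calc (∑ n : Fin N, ∑ m : Fin N, a n * conj (a m) * (inner ℂ (f m) (f n) : ℂ) ^ (k + 1))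
          = ∑ n : Fin N, ∑ m : Fin N, ∑ j,
              (a n * B j n) * conj (a m * B j m) * (inner ℂ (f m) (f n) : ℂ) ^ k :=
            Finset.sum_congr rfl fun n _ => Finset.sum_congr rfl fun m _ => e1 n m
        _ = ∑ n : Fin N, ∑ j, ∑ m : Fin N,
              (a n * B j n) * conj (a m * B j m) * (inner ℂ (f m) (f n) : ℂ) ^ k :=
            Finset.sum_congr rfl fun n _ => Finset.sum_comm
        _ = ∑ j, ∑ n : Fin N, ∑ m : Fin N,
              (a n * B j n) * conj (a m * B j m) * (inner ℂ (f m) (f n) : ℂ) ^ k :=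
            Finset.sum_comm
    choose r hr hsum using fun j => ih (fun n => a n * B j n)
    refine ⟨∑ j, r j, Finset.sum_nonneg fun j _ => hr j, ?_⟩
    rw [key, Complex.ofReal_sum]
    exact Finset.sum_congr rfl fun j _ => hsum j

lemma gram_exp_nonneg {S : Type*} [NormedAddCommGroup S] [InnerProductSpace ℂ S]
    {N : ℕ} (f : Fin N → S) (a : Fin N → ℂ) :
    ∃ r : ℝ, 0 ≤ r ∧
      ∑ n : Fin N, ∑ m : Fin N,
        a n * conj (a m) * Complex.exp ((inner ℂ (f m) (f n) : ℂ) / 2) = (r : ℂ) := by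
  choose r hr hsum using fun k => gram_pow_nonneg f k a
  have hexp : ∀ z : ℂ, Complex.exp z = ∑' k : ℕ, z ^ k / (Nat.factorial k) := by
    intro z
    rw [Complex.exp_eq_exp_ℂ, NormedSpace.exp_eq_tsum_div]
  set t : Fin N → Fin N → ℕ → ℂ :=
    fun n m k => a n * conj (a m) *
      (((inner ℂ (f m) (f n) : ℂ) / 2) ^ k / (Nat.factorial k)) with ht
  have hts : ∀ n m, Summable (t n m) := fun n m =>
    ((NormedSpace.expSeries_div_summable ((inner ℂ (f m) (f n) : ℂ) / 2)).mul_left _)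
  have step1 : ∑ n : Fin N, ∑ m : Fin N,
      a n * conj (a m) * Complex.exp ((inner ℂ (f m) (f n) : ℂ) / 2)
      = ∑' k : ℕ, ∑ n : Fin N, ∑ m : Fin N, t n m k := by
    rw [Summable.tsum_finsetSum (fun n _ => summable_sum fun m _ => hts n m)]
    refine Finset.sum_congr rfl fun n _ => ?_
    rw [Summable.tsum_finsetSum (fun m _ => hts n m)]
    refine Finset.sum_congr rfl fun m _ => ?_
    rw [hexp, ← tsum_mul_left]
  have hterm : ∀ k : ℕ, (∑ n : Fin N, ∑ m : Fin N, t n m k)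
      = ((r k / (2 ^ k * (Nat.factorial k)) : ℝ) : ℂ) := by
    intro k
    have h2 : (∑ n : Fin N, ∑ m : Fin N, t n m k)
        = (∑ n : Fin N, ∑ m : Fin N,
            a n * conj (a m) * (inner ℂ (f m) (f n) : ℂ) ^ k)
          * (1 / (2 ^ k * (Nat.factorial k))) := by
      rw [Finset.sum_mul]
      refine Finset.sum_congr rfl fun n _ => ?_
      rw [Finset.sum_mul]
      refine Finset.sum_congr rfl fun m _ => ?_
      simp only [ht, div_pow]
      have hk : ((Nat.factorial k : ℂ)) ≠ 0 := by
        exact_mod_cast Nat.factorial_ne_zero k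
      field_simp
    rw [h2, hsum k]
    push_cast
    try ring
  set g : ℕ → ℝ := fun k => r k / (2 ^ k * (Nat.factorial k)) with hg
  have hgsummable : Summable g := by
    rw [← Complex.summable_ofReal]
    have h3 : (fun k => ((g k : ℝ) : ℂ)) = fun k => ∑ n : Fin N, ∑ m : Fin N, t n m k := by
      funext k; rw [hterm k]
    rw [h3]
    exact summable_sum fun n _ => summable_sum fun m _ => hts n m
  refine ⟨∑' k, g k, tsum_nonneg fun k => ?_, ?_⟩
  · apply div_nonneg (hr k)
    positivity
  · rw [step1, Complex.ofReal_tsum]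
    exact tsum_congr fun k => hterm k

/-- Positivity of the Fock state: for any `f₁,…,f_N` in a complex inner product
space and coefficients `c₁,…,c_N`, the sum
`Σₙₘ cₙ·conj(c_m)·e^{−‖fₙ−f_m‖²/4}·e^{−(i/2)·Im⟨fₙ,f_m⟩}` is a nonnegative
real number. -/
theorem stmt_18 {S : Type*} [NormedAddCommGroup S] [InnerProductSpace ℂ S]
    (N : ℕ) (c : Fin N → ℂ) (f : Fin N → S) :
    ∃ r : ℝ, 0 ≤ r ∧
      (∑ n : Fin N, ∑ m : Fin N,
        c n * (starRingEnd ℂ) (c m) *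
          (Real.exp (-‖f n - f m‖ ^ 2 / 4) : ℂ) *
          Complex.exp (-(Complex.I / 2) * (((inner ℂ (f n) (f m) : ℂ)).im : ℂ)))
        = (r : ℂ) := by
  obtain ⟨r, hr, hsum⟩ := gram_exp_nonneg f (fun n => c n * Real.exp (-‖f n‖ ^ 2 / 4))
  refine ⟨r, hr, ?_⟩
  rw [← hsum]
  refine Finset.sum_congr rfl fun n _ => Finset.sum_congr rfl fun m _ => ?_
  simp only [map_mul, Complex.conj_ofReal]
  have hns : (‖f n - f m‖ : ℝ) ^ 2
      = ‖f n‖ ^ 2 - 2 * Complex.re (inner ℂ (f n) (f m) : ℂ) + ‖f m‖ ^ 2 := by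
    exact_mod_cast @norm_sub_sq ℂ _ _ _ _ (f n) (f m)
  have hconj : (inner ℂ (f m) (f n) : ℂ) = conj (inner ℂ (f n) (f m) : ℂ) :=
    (inner_conj_symm (f m) (f n)).symm
  set z : ℂ := (inner ℂ (f n) (f m) : ℂ) with hz
  have hexpand : (inner ℂ (f m) (f n) : ℂ) = (z.re : ℂ) - (z.im : ℂ) * Complex.I := by
    rw [hconj]
    apply Complex.ext <;> simp
  rw [hexpand]
  rw [show c n * ((Real.exp (-‖f n‖ ^ 2 / 4) : ℝ) : ℂ)
        * (conj (c m) * ((Real.exp (-‖f m‖ ^ 2 / 4) : ℝ) : ℂ)) *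
      Complex.exp (((z.re : ℂ) - (z.im : ℂ) * Complex.I) / 2)
      = c n * conj (c m) * (((Real.exp (-‖f n‖ ^ 2 / 4) : ℝ) : ℂ)
          * ((Real.exp (-‖f m‖ ^ 2 / 4) : ℝ) : ℂ) *
        Complex.exp (((z.re : ℂ) - (z.im : ℂ) * Complex.I) / 2)) from by ring,
    show c n * conj (c m) * ((Real.exp (-‖f n - f m‖ ^ 2 / 4) : ℝ) : ℂ) *
      Complex.exp (-(Complex.I / 2) * (z.im : ℂ))
      = c n * conj (c m) * (((Real.exp (-‖f n - f m‖ ^ 2 / 4) : ℝ) : ℂ) *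
        Complex.exp (-(Complex.I / 2) * (z.im : ℂ))) from by ring]
  congr 1
  simp only [Complex.ofReal_exp, ← Complex.exp_add]
  congr 1
  push_cast [hns]
  ring
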